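/- The gem graph is module-composed but not distance hereditary, and the complement of K₃,₃ minus an edge is distance hereditary but not module-composed; hence neither of the classes of module-composed graphs and distance hereditary graphs contains the other. -/
import Mathlib


open scoped Classical

/-- `M` is a module (homogeneous set) of `G`: every two vertices of `M`
have the same neighbours outside `M`. -/
def SimpleGraph.IsModule {V : Type*} (G : SimpleGraph V) (M : Set V) : Prop :=
  ∀ v₁ ∈ M, ∀ v₂ ∈ M, ∀ w ∉ M, (G.Adj v₁ w ↔ G.Adj v₂ w)

/-- `G` is module-composed: there is a linear ordering `v₀, …, v_{n-1}` of the
vertices such that for every `i ≥ 1` the neighbourhood of `vᵢ` inside the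
induced subgraph on `{v₀, …, v_{i-1}}` is a module of that induced subgraph. -/
def SimpleGraph.ModuleComposed {V : Type*} [Fintype V] (G : SimpleGraph V) : Prop :=
  ∃ e : Fin (Fintype.card V) ≃ V,
    ∀ i : Fin (Fintype.card V), 0 < (i : ℕ) →
      (G.induce {v | ∃ j, j < i ∧ e j = v}).IsModule
        {w : {v | ∃ j, j < i ∧ e j = v} | G.Adj (e i) ↑w}


/-- `G` is distance hereditary: in every connected induced subgraph, distances
agree with distances in `G`. -/
def SimpleGraph.DistHereditary {V : Type*} (G : SimpleGraph V) : Prop :=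
  ∀ S : Set V, ∀ u v : S, (G.induce S).Reachable u v →
    (G.induce S).dist u v = G.dist ↑u ↑v

/-- The gem graph: a path `0-1-2-3` together with a fifth vertex `4`
adjacent to all four path vertices. -/
def gem : SimpleGraph (Fin 5) :=
  SimpleGraph.fromRel (fun a b =>
    (a, b) ∈ [((0 : Fin 5), (1 : Fin 5)), (1, 2), (2, 3),
              (4, 0), (4, 1), (4, 2), (4, 3)])

/-- `K₃,₃ − e`: the complete bipartite graph with parts `{0,1,2}` and
`{3,4,5}`, minus the edge `{0,3}`. -/
def K33MinusEdge : SimpleGraph (Fin 6) :=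
  SimpleGraph.fromRel (fun a b =>
    (a : ℕ) < 3 ∧ 3 ≤ (b : ℕ) ∧ ¬((a : ℕ) = 0 ∧ (b : ℕ) = 3))

/-! ### Auxiliary decidability instances and lemmas -/

instance SimpleGraph.IsModule.dec {V : Type*} [Fintype V] (G : SimpleGraph V)
    [DecidableRel G.Adj] (M : Set V) [DecidablePred (· ∈ M)] :
    Decidable (G.IsModule M) :=
  inferInstanceAs (Decidable (∀ v₁ ∈ M, ∀ v₂ ∈ M, ∀ w ∉ M, (G.Adj v₁ w ↔ G.Adj v₂ w)))

instance SimpleGraph.induce.dec {V : Type*} (G : SimpleGraph V) [DecidableRel G.Adj]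
    (s : Set V) : DecidableRel (G.induce s).Adj :=
  fun a b => inferInstanceAs (Decidable (G.Adj ↑a ↑b))

instance walkLen.dec {V : Type*} [DecidableEq V] (G : SimpleGraph V) [DecidableRel G.Adj]
    [G.LocallyFinite] (u v : V) (m : ℕ) :
    Decidable (∃ p : G.Walk u v, p.length = m) :=
  decidable_of_iff ((G.finsetWalkLength m u v).Nonempty)
    ⟨fun ⟨p, hp⟩ => ⟨p, SimpleGraph.mem_finsetWalkLength_iff.mp hp⟩,
     fun ⟨p, hp⟩ => ⟨p, SimpleGraph.mem_finsetWalkLength_iff.mpr hp⟩⟩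

/-- A characterisation of `G.dist u v = m` via existence of walks. -/
lemma dist_eq_iff_walks {V : Type*} {G : SimpleGraph V} {u v : V}
    (h : G.Reachable u v) (m : ℕ) :
    G.dist u v = m ↔ (∃ p : G.Walk u v, p.length = m) ∧
      ∀ k < m, ¬ ∃ p : G.Walk u v, p.length = k := by
  constructor
  · rintro rfl
    refine ⟨h.exists_walk_length_eq_dist, ?_⟩
    rintro k hk ⟨p, hp⟩
    exact absurd (hp ▸ G.dist_le p) (by omega)
  · rintro ⟨⟨p, hp⟩, hmin⟩
    refine le_antisymm (hp ▸ G.dist_le p) ?_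
    by_contra hlt
    push_neg at hlt
    obtain ⟨q, hq⟩ := h.exists_walk_length_eq_dist
    exact hmin _ (by omega) ⟨q, hq⟩

instance : DecidableRel gem.Adj := fun a b => by
  change Decidable (a ≠ b ∧ (_ ∨ _)); infer_instance

instance : DecidableRel K33MinusEdge.Adj := fun a b => by
  change Decidable (a ≠ b ∧ (_ ∨ _)); infer_instance

instance : DecidableRel K33MinusEdgeᶜ.Adj := fun a b =>
  inferInstanceAs (Decidable (a ≠ b ∧ ¬ K33MinusEdge.Adj a b))

set_option maxRecDepth 40000 in
/-- The exhaustive distance check for the complement of `K₃,₃ − e`. -/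
lemma K33c_dist_aux : ∀ s : Finset (Fin 6), ∀ u v : (↑s : Set (Fin 6)),
    (K33MinusEdgeᶜ.induce ↑s).Reachable u v →
    ∃ m : Fin 6,
      ((∃ p : (K33MinusEdgeᶜ.induce ↑s).Walk u v, p.length = (m : ℕ)) ∧
        ∀ k < (m : ℕ), ¬ ∃ p : (K33MinusEdgeᶜ.induce ↑s).Walk u v, p.length = k) ∧
      ((∃ p : K33MinusEdgeᶜ.Walk ↑u ↑v, p.length = (m : ℕ)) ∧
        ∀ k < (m : ℕ), ¬ ∃ p : K33MinusEdgeᶜ.Walk ↑u ↑v, p.length = k) := by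
  decide

lemma gem_moduleComposed : gem.ModuleComposed := by
  refine ⟨finCongr (Fintype.card_fin 5), ?_⟩
  decide

abbrev gemS : Set (Fin 5) := (↑({0, 1, 2, 3} : Finset (Fin 5)) : Set (Fin 5))
abbrev gemU : gemS := ⟨0, by decide⟩
abbrev gemV : gemS := ⟨3, by decide⟩

lemma gem_not_distHereditary : ¬ gem.DistHereditary := by
  intro h
  have hwalk : ∃ p : (gem.induce gemS).Walk gemU gemV, p.length = 3 := by decide
  have hreach : (gem.induce gemS).Reachable gemU gemV := by
    obtain ⟨p, -⟩ := hwalk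
    exact ⟨p⟩
  have hambreach : gem.Reachable (0 : Fin 5) (3 : Fin 5) := by
    have : ∃ p : gem.Walk (0 : Fin 5) 3, p.length = 2 := by decide
    obtain ⟨p, -⟩ := this
    exact ⟨p⟩
  have hd1 : (gem.induce gemS).dist gemU gemV = 3 := by
    rw [dist_eq_iff_walks hreach]
    exact ⟨hwalk, by decide⟩
  have hd2 : gem.dist (0 : Fin 5) (3 : Fin 5) = 2 := by
    rw [dist_eq_iff_walks hambreach]
    decide
  have := h gemS gemU gemV hreach
  rw [hd1, hd2] at this
  exact absurd this (by norm_num)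

lemma K33c_distHereditary : K33MinusEdgeᶜ.DistHereditary := by
  intro S u v hr
  obtain ⟨s, rfl⟩ : ∃ s : Finset (Fin 6), (↑s : Set (Fin 6)) = S :=
    ⟨S.toFinset, S.coe_toFinset⟩
  obtain ⟨m, hind, hamb⟩ := K33c_dist_aux s u v hr
  have hambreach : K33MinusEdgeᶜ.Reachable ↑u ↑v := by
    obtain ⟨p, -⟩ := hamb.1
    exact ⟨p⟩
  rw [(dist_eq_iff_walks hr (m : ℕ)).mpr hind,
      (dist_eq_iff_walks hambreach (m : ℕ)).mpr hamb]

lemma K33c_not_moduleComposed : ¬ K33MinusEdgeᶜ.ModuleComposed := by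
  have key : ∀ x : Fin 6,
      ¬ (K33MinusEdgeᶜ.induce {v | v ≠ x}).IsModule
          {w : {v : Fin 6 | v ≠ x} | K33MinusEdgeᶜ.Adj x ↑w} := by decide
  rintro ⟨e, h⟩
  have hcard : (5 : ℕ) < Fintype.card (Fin 6) := by simp
  set i5 : Fin (Fintype.card (Fin 6)) := ⟨5, hcard⟩ with hi5
  have h5 := h i5 (by norm_num)
  have hset : {v | ∃ j, j < i5 ∧ e j = v} = {v : Fin 6 | v ≠ e i5} := by
    ext v
    constructor
    · rintro ⟨j, hj, rfl⟩
      intro hc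
      have := e.injective hc
      subst this
      exact absurd hj (lt_irrefl _)
    · intro hv
      refine ⟨e.symm v, ?_, by simp⟩
      have h1 : (e.symm v : ℕ) < Fintype.card (Fin 6) := (e.symm v).isLt
      have h2 : Fintype.card (Fin 6) = 6 := by simp
      have h3 : e.symm v ≠ i5 := by
        intro hc
        apply hv
        rw [← hc, Equiv.apply_symm_apply]
      have h4 : (e.symm v : ℕ) ≠ 5 := by
        intro hc
        exact h3 (Fin.ext (by rw [hc, hi5]))
      show (e.symm v : ℕ) < 5
      omega
  rw [hset] at h5
  exact key (e i5) h5

/-- The gem is module-composed but not distance hereditary, while the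
complement of `K₃,₃ − e` is distance hereditary but not module-composed;
hence neither of the two graph classes contains the other. -/
theorem moduleComposed_distHereditary_incomparable :
    gem.ModuleComposed ∧ ¬ gem.DistHereditary ∧
    K33MinusEdgeᶜ.DistHereditary ∧ ¬ K33MinusEdgeᶜ.ModuleComposed ∧
    ¬ (∀ (V : Type) [Fintype V] (G : SimpleGraph V),
        G.ModuleComposed → G.DistHereditary) ∧
    ¬ (∀ (V : Type) [Fintype V] (G : SimpleGraph V),
        G.DistHereditary → G.ModuleComposed) := by
  refine ⟨gem_moduleComposed, gem_not_distHereditary, K33c_distHereditary,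
    K33c_not_moduleComposed, ?_, ?_⟩
  · intro h
    exact gem_not_distHereditary (h (Fin 5) gem gem_moduleComposed)
  · intro h
    exact K33c_not_moduleComposed (h (Fin 6) K33MinusEdgeᶜ K33c_distHereditary)
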